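/- In the presented group ⟨x, y, z ∣ x² = y² = z² = 1, xyx = yxy, yzy = zyz, zxz = xzx⟩, the identity (z·x·y·z)·(y·z·x·y)·(x·y·z·x) = 1 holds. (In the notation of the paper, Q_Z Q_Y Q_X = I is a consequence of the relations (7.1).) -/

import Mathlib

/-- The generator `x` as an element of the free group on three generators. -/
def xGen : FreeGroup (Fin 3) := FreeGroup.of 0

/-- The generator `y` as an element of the free group on three generators. -/
def yGen : FreeGroup (Fin 3) := FreeGroup.of 1

/-- The generator `z` as an element of the free group on three generators. -/
def zGen : FreeGroup (Fin 3) := FreeGroup.of 2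

/-- Relators for the group ⟨x, y, z ∣ x² = y² = z² = 1,
xyx = yxy, yzy = zyz, zxz = xzx⟩ (the relations (7.1) of the paper). -/
def rels3 : Set (FreeGroup (Fin 3)) :=
  {xGen ^ 2, yGen ^ 2, zGen ^ 2,
   (xGen * yGen * xGen) * (yGen * xGen * yGen)⁻¹,
   (yGen * zGen * yGen) * (zGen * yGen * zGen)⁻¹,
   (zGen * xGen * zGen) * (xGen * zGen * xGen)⁻¹}

/-- The image of `x` in the presented group. -/
def X : PresentedGroup rels3 := PresentedGroup.of 0

/-- The image of `y` in the presented group. -/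
def Y : PresentedGroup rels3 := PresentedGroup.of 1

/-- The image of `z` in the presented group. -/
def Z : PresentedGroup rels3 := PresentedGroup.of 2


lemma rel_eq_one {r : FreeGroup (Fin 3)} (h : r ∈ rels3) :
    (QuotientGroup.mk r : PresentedGroup rels3) = 1 := by
  rw [QuotientGroup.eq_one_iff]
  exact Subgroup.subset_normalClosure h

lemma hx : X * X = 1 := by
  have := rel_eq_one (show xGen ^ 2 ∈ rels3 from Or.inl rfl)
  simp [X, PresentedGroup.of, xGen, pow_two, QuotientGroup.mk_mul] at this; exact this

lemma hy : Y * Y = 1 := by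
  have := rel_eq_one (show yGen ^ 2 ∈ rels3 from Or.inr (Or.inl rfl))
  simp [Y, PresentedGroup.of, yGen, pow_two, QuotientGroup.mk_mul] at this; exact this

lemma hz : Z * Z = 1 := by
  have := rel_eq_one (show zGen ^ 2 ∈ rels3 from Or.inr (Or.inr (Or.inl rfl)))
  simp [Z, PresentedGroup.of, zGen, pow_two, QuotientGroup.mk_mul] at this; exact this

lemma hxyx : X * Y * X = Y * X * Y := by
  have := rel_eq_one (show (xGen * yGen * xGen) * (yGen * xGen * yGen)⁻¹ ∈ rels3 from
    Or.inr (Or.inr (Or.inr (Or.inl rfl))))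
  rw [QuotientGroup.mk_mul, QuotientGroup.mk_inv, mul_inv_eq_one] at this
  simp [X, Y, PresentedGroup.of, xGen, yGen, QuotientGroup.mk_mul] at this; exact this

lemma hyzy : Y * Z * Y = Z * Y * Z := by
  have := rel_eq_one (show (yGen * zGen * yGen) * (zGen * yGen * zGen)⁻¹ ∈ rels3 from
    Or.inr (Or.inr (Or.inr (Or.inr (Or.inl rfl)))))
  rw [QuotientGroup.mk_mul, QuotientGroup.mk_inv, mul_inv_eq_one] at this
  simp [Y, Z, PresentedGroup.of, yGen, zGen, QuotientGroup.mk_mul] at this; exact this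

lemma hzxz : Z * X * Z = X * Z * X := by
  have := rel_eq_one (show (zGen * xGen * zGen) * (xGen * zGen * xGen)⁻¹ ∈ rels3 from
    Or.inr (Or.inr (Or.inr (Or.inr (Or.inr rfl)))))
  rw [QuotientGroup.mk_mul, QuotientGroup.mk_inv, mul_inv_eq_one] at this
  simp [Z, X, PresentedGroup.of, zGen, xGen, QuotientGroup.mk_mul] at this; exact this

lemma hx' : ∀ w : PresentedGroup rels3, X * (X * w) = w := by
  intro w; rw [← mul_assoc, hx, one_mul]
lemma hy' : ∀ w : PresentedGroup rels3, Y * (Y * w) = w := by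
  intro w; rw [← mul_assoc, hy, one_mul]
lemma hz' : ∀ w : PresentedGroup rels3, Z * (Z * w) = w := by
  intro w; rw [← mul_assoc, hz, one_mul]
lemma hxyx' : ∀ w : PresentedGroup rels3, X * (Y * (X * w)) = Y * (X * (Y * w)) := by
  intro w; simp only [← mul_assoc, hxyx]
lemma hyzy' : ∀ w : PresentedGroup rels3, Y * (Z * (Y * w)) = Z * (Y * (Z * w)) := by
  intro w; simp only [← mul_assoc, hyzy]
lemma hzxz' : ∀ w : PresentedGroup rels3, Z * (X * (Z * w)) = X * (Z * (X * w)) := by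
  intro w; simp only [← mul_assoc, hzxz]

/-- In ⟨x, y, z ∣ x² = y² = z² = 1, xyx = yxy, yzy = zyz, zxz = xzx⟩, the
identity `Q_Z · Q_Y · Q_X = 1` holds, where `Q_X = xyzx`, `Q_Y = yzxy`,
`Q_Z = zxyz`. -/
theorem QZ_mul_QY_mul_QX_eq_one :
    (Z * X * Y * Z) * (Y * Z * X * Y) * (X * Y * Z * X) = 1 := by
  simp only [mul_assoc]
  -- word: z x y z y z x y x y z x
  rw [hxyx' (Y * (Z * X))]   -- z x y z y z y x y y z x
  rw [hy' (Z * X)]           -- z x y z y z y x z x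
  rw [hyzy']                 -- z x z y z z y x z x
  rw [hz']                   -- z x z y y x z x
  rw [hy']                   -- z x z x z x
  rw [hzxz']                 -- x z x x z x
  rw [hx']                   -- x z z x
  rw [hz']                   -- x x
  exact hx
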